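/- The set of all f ∈ L²((0,T),ℝ^m) that admit a representative of the form f(t) = c + ∫_0^t g(s) ds for a.e. t ∈ (0,T), for some c ∈ ℝ^m and g ∈ L²((0,T),ℝ^m) (that is, the Sobolev space W^{1,2}((0,T),ℝ^m)), is a Borel subset of the Hilbert space L²((0,T),ℝ^m). -/

import Mathlib

noncomputable section

open MeasureTheory Filter

/-- `ℝ^m` with the Euclidean norm. -/
abbrev Em (m : ℕ) : Type := EuclideanSpace ℝ (Fin m)

/-- Lebesgue measure restricted to `(0,T)`. -/
abbrev muT (T : ℝ) : Measure ℝ := volume.restrict (Set.Ioo (0:ℝ) T)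

open Set intervalIntegral
open scoped ENNReal

namespace Stmt8Aux
variable {m : ℕ} {T : ℝ}

instance (T : ℝ) : IsFiniteMeasure (muT T) :=
  ⟨by rw [Measure.restrict_apply_univ]; exact measure_Ioo_lt_top⟩

lemma integrableOn_Icc (g : Lp (Em m) 2 (muT T)) :
    IntegrableOn (g : ℝ → Em m) (Set.Icc 0 T) volume := by
  have h1 : Integrable (g : ℝ → Em m) (muT T) :=
    (Lp.memLp g).integrable (by norm_num)
  have h2 : IntegrableOn (g : ℝ → Em m) (Set.Ioo 0 T) volume := h1
  rwa [IntegrableOn, Measure.restrict_congr_set Ioo_ae_eq_Icc] at h2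

lemma intervalIntegrable' (g : Lp (Em m) 2 (muT T)) {a b : ℝ}
    (ha : a ∈ Set.Icc 0 T) (hb : b ∈ Set.Icc 0 T) :
    IntervalIntegrable (g : ℝ → Em m) volume a b := by
  refine IntegrableOn.intervalIntegrable ((integrableOn_Icc g).mono_set ?_)
  exact Set.uIcc_subset_Icc ha hb

/-- the candidate representative -/
def P (c : Em m) (g : Lp (Em m) 2 (muT T)) : ℝ → Em m :=
  fun t => c + ∫ s in (0:ℝ)..t, (g : ℝ → Em m) s

lemma contOn (hT : 0 ≤ T) (c : Em m) (g : Lp (Em m) 2 (muT T)) :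
    ContinuousOn (P c g) (Set.Icc 0 T) := by
  refine continuousOn_const.add ?_
  have := intervalIntegral.continuousOn_primitive_interval
    (a := (0:ℝ)) (b := T) (μ := volume) (f := (g : ℝ → Em m))
    (by rw [Set.uIcc_of_le hT]; exact integrableOn_Icc g)
  rwa [Set.uIcc_of_le hT] at this

lemma ae_uIoc {t : ℝ} (ht : t ∈ Set.Icc (0:ℝ) T) {p : ℝ → Prop}
    (h : ∀ᵐ s ∂(muT T), p s) :
    ∀ᵐ s ∂(volume : Measure ℝ), s ∈ Set.uIoc (0:ℝ) t → p s := by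
  have h' : ∀ᵐ s ∂(volume : Measure ℝ), s ∈ Set.Ioo (0:ℝ) T → p s :=
    (ae_restrict_iff' measurableSet_Ioo).mp h
  have hne : ∀ᵐ s ∂(volume : Measure ℝ), s ≠ t := by
    rw [ae_iff]
    simpa only [not_not, Set.setOf_eq_eq_singleton] using measure_singleton t
  filter_upwards [h', hne] with s hs hst hmem
  rw [Set.uIoc_of_le ht.1] at hmem
  exact hs ⟨hmem.1, lt_of_lt_of_le (lt_of_le_of_ne hmem.2 hst) ht.2⟩

lemma norm_P_le (c : Em m) (g : Lp (Em m) 2 (muT T)) :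
    ∀ᵐ t ∂(muT T), ‖P c g t‖ ≤ ‖c‖ + ∫ s, ‖(g : ℝ → Em m) s‖ ∂(muT T) := by
  have h1 : Integrable (g : ℝ → Em m) (muT T) :=
    (Lp.memLp g).integrable (by norm_num)
  filter_upwards [ae_restrict_mem measurableSet_Ioo] with t ht
  refine (norm_add_le _ _).trans (add_le_add_right ?_ _)
  calc ‖∫ s in (0:ℝ)..t, (g : ℝ → Em m) s‖
      ≤ ∫ s in (0:ℝ)..t, ‖(g : ℝ → Em m) s‖ :=
        intervalIntegral.norm_integral_le_integral_norm ht.1.le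
    _ = ∫ s in Set.Ioc 0 t, ‖(g : ℝ → Em m) s‖ ∂volume := by
        rw [intervalIntegral.integral_of_le ht.1.le]
    _ ≤ ∫ s in Set.Ioo 0 T, ‖(g : ℝ → Em m) s‖ ∂volume := by
        refine setIntegral_mono_set h1.norm ?_ ?_
        · exact Eventually.of_forall fun s => norm_nonneg _
        · exact HasSubset.Subset.eventuallyLE fun s hs => ⟨hs.1, hs.2.trans_lt ht.2⟩
    _ = ∫ s, ‖(g : ℝ → Em m) s‖ ∂(muT T) := rfl

lemma memℒp_P (hT : 0 ≤ T) (c : Em m) (g : Lp (Em m) 2 (muT T)) :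
    MemLp (P c g) 2 (muT T) := by
  refine MemLp.of_bound ?_ _ (norm_P_le c g)
  exact ((contOn hT c g).mono Set.Ioo_subset_Icc_self).aestronglyMeasurable measurableSet_Ioo



lemma L1_le (hT : 0 ≤ T) (g : Lp (Em m) 2 (muT T)) :
    ∫ s, ‖(g : ℝ → Em m) s‖ ∂(muT T) ≤ Real.sqrt T * ‖g‖ := by
  have hg := Lp.aestronglyMeasurable g
  have h1 : eLpNorm (g : ℝ → Em m) 1 (muT T)
      ≤ eLpNorm (g : ℝ → Em m) 2 (muT T) * (muT T Set.univ) ^ ((1:ℝ)/(1:ℝ≥0∞).toReal - 1/(2:ℝ≥0∞).toReal) :=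
    eLpNorm_le_eLpNorm_mul_rpow_measure_univ (by norm_num) hg
  have hexp : (1:ℝ)/(1:ℝ≥0∞).toReal - 1/(2:ℝ≥0∞).toReal = 1/2 := by norm_num
  rw [hexp] at h1
  have huniv : muT T Set.univ = ENNReal.ofReal T := by
    rw [Measure.restrict_apply_univ, Real.volume_Ioo, sub_zero]
  rw [huniv] at h1
  have hfin : eLpNorm (g : ℝ → Em m) 2 (muT T) * ENNReal.ofReal T ^ ((1:ℝ)/2) ≠ ⊤ :=
    ENNReal.mul_ne_top (Lp.eLpNorm_ne_top g)
      (ENNReal.rpow_ne_top_of_nonneg (by norm_num) ENNReal.ofReal_ne_top)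
  have h2 := ENNReal.toReal_mono hfin h1
  have h3 : (eLpNorm (g : ℝ → Em m) 1 (muT T)).toReal = ∫ s, ‖(g : ℝ → Em m) s‖ ∂(muT T) := by
    rw [eLpNorm_one_eq_lintegral_enorm, ← integral_norm_eq_lintegral_enorm hg]
  rw [h3, ENNReal.toReal_mul, ← ENNReal.toReal_rpow, ENNReal.toReal_ofReal hT] at h2
  calc ∫ s, ‖(g : ℝ → Em m) s‖ ∂(muT T)
      ≤ (eLpNorm (g : ℝ → Em m) 2 (muT T)).toReal * T ^ ((1:ℝ)/2) := h2
    _ = Real.sqrt T * ‖g‖ := by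
        rw [Lp.norm_def, Real.sqrt_eq_rpow, mul_comm]

lemma P_add (hT : 0 ≤ T) (c₁ c₂ : Em m) (g₁ g₂ : Lp (Em m) 2 (muT T)) {t : ℝ}
    (ht : t ∈ Set.Icc (0:ℝ) T) :
    P (c₁ + c₂) (g₁ + g₂) t = P c₁ g₁ t + P c₂ g₂ t := by
  have hco : ∀ᵐ s ∂(volume : Measure ℝ), s ∈ Set.uIoc (0:ℝ) t →
      ((g₁ + g₂ : Lp (Em m) 2 (muT T)) : ℝ → Em m) s = (g₁ : ℝ → Em m) s + (g₂ : ℝ → Em m) s :=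
    ae_uIoc ht (Lp.coeFn_add g₁ g₂)
  have h0 : (0:ℝ) ∈ Set.Icc (0:ℝ) T := ⟨le_refl 0, ht.1.trans ht.2⟩
  unfold P
  rw [intervalIntegral.integral_congr_ae hco,
    intervalIntegral.integral_add (intervalIntegrable' g₁ h0 ht) (intervalIntegrable' g₂ h0 ht)]
  abel

lemma P_smul (hT : 0 ≤ T) (r : ℝ) (c : Em m) (g : Lp (Em m) 2 (muT T)) {t : ℝ}
    (ht : t ∈ Set.Icc (0:ℝ) T) :
    P (r • c) (r • g) t = r • P c g t := by
  have hco : ∀ᵐ s ∂(volume : Measure ℝ), s ∈ Set.uIoc (0:ℝ) t →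
      ((r • g : Lp (Em m) 2 (muT T)) : ℝ → Em m) s = r • (g : ℝ → Em m) s :=
    ae_uIoc ht (Lp.coeFn_smul r g)
  unfold P
  rw [intervalIntegral.integral_congr_ae hco, intervalIntegral.integral_smul, smul_add]

/-- the linear map `(c, g) ↦ (t ↦ c + ∫_0^t g)` into `L²` -/
def Phi (m : ℕ) (T : ℝ) (hT : 0 < T) :
    (Em m × Lp (Em m) 2 (muT T)) →ₗ[ℝ] Lp (Em m) 2 (muT T) where
  toFun x := (memℒp_P hT.le x.1 x.2).toLp (P x.1 x.2)
  map_add' x y := by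
    rw [← MemLp.toLp_add (memℒp_P hT.le x.1 x.2) (memℒp_P hT.le y.1 y.2)]
    refine MemLp.toLp_congr _ _ ?_
    filter_upwards [ae_restrict_mem measurableSet_Ioo] with t ht
    exact P_add hT.le _ _ _ _ (Set.Ioo_subset_Icc_self ht)
  map_smul' r x := by
    simp only [RingHom.id_apply]
    rw [← MemLp.toLp_const_smul r (memℒp_P hT.le x.1 x.2)]
    refine MemLp.toLp_congr _ _ ?_
    filter_upwards [ae_restrict_mem measurableSet_Ioo] with t ht
    exact P_smul hT.le r _ _ (Set.Ioo_subset_Icc_self ht)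

lemma Phi_cont (hT : 0 < T) : Continuous (Phi m T hT) := by
  refine AddMonoidHomClass.continuous_of_bound (Phi m T hT)
    ((measureUnivNNReal (muT T)) ^ ((2:ℝ≥0∞).toReal)⁻¹ * (1 + Real.sqrt T)) (fun x => ?_)
  have hb : ∀ᵐ t ∂(muT T), ‖(Phi m T hT x : ℝ → Em m) t‖ ≤ ‖x.1‖ + Real.sqrt T * ‖x.2‖ := by
    filter_upwards [norm_P_le x.1 x.2, MemLp.coeFn_toLp (memℒp_P hT.le x.1 x.2)] with t h1 h2
    calc ‖(Phi m T hT x : ℝ → Em m) t‖ = ‖P x.1 x.2 t‖ := by rw [show (Phi m T hT x : ℝ → Em m) t = P x.1 x.2 t from h2]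
      _ ≤ ‖x.1‖ + ∫ s, ‖(x.2 : ℝ → Em m) s‖ ∂(muT T) := h1
      _ ≤ ‖x.1‖ + Real.sqrt T * ‖x.2‖ := add_le_add_right (L1_le hT.le x.2) _
  have hC : (0:ℝ) ≤ ‖x.1‖ + Real.sqrt T * ‖x.2‖ := by positivity
  have := Lp.norm_le_of_ae_bound hC hb
  refine this.trans ?_
  rw [mul_assoc]
  refine mul_le_mul_of_nonneg_left ?_ (by positivity)
  have h1 : ‖x.1‖ ≤ ‖x‖ := le_max_left _ _
  have h2 : ‖x.2‖ ≤ ‖x‖ := le_max_right _ _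
  have hs : (0:ℝ) ≤ Real.sqrt T := Real.sqrt_nonneg T
  nlinarith [norm_nonneg x]



lemma intdiff (hT : 0 < T) {c₁ c₂ : Em m} {g₁ g₂ : Lp (Em m) 2 (muT T)}
    (heq : Set.EqOn (P c₁ g₁) (P c₂ g₂) (Set.Ioo 0 T))
    {a b : ℝ} (ha : a ∈ Set.Icc (0:ℝ) T) (hb : b ∈ Set.Icc (0:ℝ) T)
    (ha' : P c₁ g₁ a = P c₂ g₂ a) (hb' : P c₁ g₁ b = P c₂ g₂ b) :
    ∫ s in a..b, ((g₁ : ℝ → Em m) s - (g₂ : ℝ → Em m) s) = 0 := by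
  have h0 : (0:ℝ) ∈ Set.Icc (0:ℝ) T := ⟨le_refl 0, hT.le⟩
  rw [intervalIntegral.integral_sub (intervalIntegrable' g₁ ha hb)
    (intervalIntegrable' g₂ ha hb), sub_eq_zero]
  have e₁ : ∫ s in a..b, (g₁ : ℝ → Em m) s
      = (∫ s in (0:ℝ)..b, (g₁ : ℝ → Em m) s) - ∫ s in (0:ℝ)..a, (g₁ : ℝ → Em m) s :=
    (intervalIntegral.integral_interval_sub_left (intervalIntegrable' g₁ h0 hb)
      (intervalIntegrable' g₁ h0 ha)).symm
  have e₂ : ∫ s in a..b, (g₂ : ℝ → Em m) s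
      = (∫ s in (0:ℝ)..b, (g₂ : ℝ → Em m) s) - ∫ s in (0:ℝ)..a, (g₂ : ℝ → Em m) s :=
    (intervalIntegral.integral_interval_sub_left (intervalIntegrable' g₂ h0 hb)
      (intervalIntegrable' g₂ h0 ha)).symm
  have hb'' : ∫ s in (0:ℝ)..b, (g₁ : ℝ → Em m) s
      = (c₂ - c₁) + ∫ s in (0:ℝ)..b, (g₂ : ℝ → Em m) s := by
    have h' : c₁ + ∫ s in (0:ℝ)..b, (g₁ : ℝ → Em m) s
        = c₂ + ∫ s in (0:ℝ)..b, (g₂ : ℝ → Em m) s := hb'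
    have : ∫ s in (0:ℝ)..b, (g₁ : ℝ → Em m) s
        = (c₂ + ∫ s in (0:ℝ)..b, (g₂ : ℝ → Em m) s) - c₁ := by
      rw [← h']; abel
    rw [this]; abel
  have ha'' : ∫ s in (0:ℝ)..a, (g₁ : ℝ → Em m) s
      = (c₂ - c₁) + ∫ s in (0:ℝ)..a, (g₂ : ℝ → Em m) s := by
    have h' : c₁ + ∫ s in (0:ℝ)..a, (g₁ : ℝ → Em m) s
        = c₂ + ∫ s in (0:ℝ)..a, (g₂ : ℝ → Em m) s := ha'
    have : ∫ s in (0:ℝ)..a, (g₁ : ℝ → Em m) s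
        = (c₂ + ∫ s in (0:ℝ)..a, (g₂ : ℝ → Em m) s) - c₁ := by
      rw [← h']; abel
    rw [this]; abel
  rw [e₁, e₂, hb'', ha'']; abel

lemma Phi_inj (hT : 0 < T) : Function.Injective (Phi m T hT) := by
  rintro ⟨c₁, g₁⟩ ⟨c₂, g₂⟩ h
  have hae : P c₁ g₁ =ᵐ[muT T] P c₂ g₂ := by
    have h1 := MemLp.coeFn_toLp (memℒp_P hT.le c₁ g₁)
    have h2 := MemLp.coeFn_toLp (memℒp_P hT.le c₂ g₂)
    have h3 : ((Phi m T hT) (c₁, g₁) : ℝ → Em m) =ᵐ[muT T] ((Phi m T hT) (c₂, g₂) : ℝ → Em m) := by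
      rw [h]
    exact h1.symm.trans (h3.trans h2)
  have heq : Set.EqOn (P c₁ g₁) (P c₂ g₂) (Set.Ioo 0 T) :=
    Measure.eqOn_Ioo_of_ae_eq (volume : Measure ℝ) hae
      ((contOn hT.le c₁ g₁).mono Set.Ioo_subset_Icc_self)
      ((contOn hT.le c₂ g₂).mono Set.Ioo_subset_Icc_self)
  -- Lebesgue differentiation to get g₁ = g₂ a.e.
  set h12 : ℝ → Em m := fun s => (g₁ : ℝ → Em m) s - (g₂ : ℝ → Em m) s with hh12
  have hint : IntegrableOn h12 (Set.Ioo 0 T) volume :=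
    (((integrableOn_Icc g₁).mono_set Set.Ioo_subset_Icc_self).sub
      ((integrableOn_Icc g₂).mono_set Set.Ioo_subset_Icc_self))
  set H : ℝ → Em m := (Set.Ioo (0:ℝ) T).indicator h12 with hH
  have hHint : Integrable H volume :=
    (integrable_indicator_iff measurableSet_Ioo).mpr hint
  have key := IsUnifLocDoublingMeasure.ae_tendsto_average (μ := (volume : Measure ℝ))
    hHint.locallyIntegrable 1
  have hg : (g₁ : ℝ → Em m) =ᵐ[muT T] (g₂ : ℝ → Em m) := by
    filter_upwards [ae_restrict_of_ae key, ae_restrict_mem measurableSet_Ioo] with x hx hxm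
    have hε : 0 < min x (T - x) / 2 := by
      have := hxm.1; have := hxm.2
      have : 0 < min x (T - x) := lt_min hxm.1 (sub_pos.mpr hxm.2)
      linarith
    set ε := min x (T - x) / 2 with hεdef
    set δ : ℕ → ℝ := fun n => ε / (n + 1) with hδ
    have hδpos : ∀ n, 0 < δ n := fun n => div_pos hε (by positivity)
    have hδle : ∀ n, δ n ≤ ε := fun n => by
      rw [hδ]
      have h1 : (0:ℝ) ≤ n := Nat.cast_nonneg n
      exact div_le_self hε.le (by linarith)
    have hδtend : Tendsto δ atTop (nhdsWithin 0 (Set.Ioi 0)) := by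
      rw [tendsto_nhdsWithin_iff]
      constructor
      · have h1 : Tendsto (fun n : ℕ => 1 / ((n : ℝ) + 1)) atTop (nhds 0) :=
          tendsto_one_div_add_atTop_nhds_zero_nat
        have := h1.const_mul ε
        simpa [hδ, div_eq_mul_inv, mul_comm] using this
      · exact Eventually.of_forall fun n => hδpos n
    have haux := hx (fun _ => x) δ hδtend
      (Eventually.of_forall fun j => by
        rw [one_mul]; exact Metric.mem_closedBall_self (hδpos j).le)
    have hzero : ∀ j, (⨍ y in Metric.closedBall x (δ j), H y ∂volume) = 0 := by
      intro j
      have hsub : Metric.closedBall x (δ j) ⊆ Set.Ioo 0 T := by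
        intro y hy
        rw [Real.closedBall_eq_Icc] at hy
        have h1 : ε ≤ x / 2 := by
          rw [hεdef]; exact div_le_div_of_nonneg_right (min_le_left _ _) (by norm_num)
        have h2 : ε ≤ (T - x) / 2 := by
          rw [hεdef]; exact div_le_div_of_nonneg_right (min_le_right _ _) (by norm_num)
        have := hδle j
        constructor
        · nlinarith [hy.1, hxm.1]
        · nlinarith [hy.2, hxm.2]
      have hiz : ∫ y in Metric.closedBall x (δ j), H y ∂volume = 0 := by
        rw [Real.closedBall_eq_Icc]
        rw [hH, setIntegral_indicator measurableSet_Ioo]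
        have hinter : Set.Icc (x - δ j) (x + δ j) ∩ Set.Ioo 0 T
            = Set.Icc (x - δ j) (x + δ j) := by
          apply Set.inter_eq_left.mpr
          rw [← Real.closedBall_eq_Icc]; exact hsub
        rw [hinter, integral_Icc_eq_integral_Ioc,
          ← intervalIntegral.integral_of_le (by linarith [hδpos j] : x - δ j ≤ x + δ j)]
        have hd := hδpos j
        have hma : x - δ j ∈ Set.Ioo (0:ℝ) T :=
          hsub (by rw [Real.closedBall_eq_Icc]; exact ⟨le_refl _, by linarith⟩)
        have hmb : x + δ j ∈ Set.Ioo (0:ℝ) T :=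
          hsub (by rw [Real.closedBall_eq_Icc]; exact ⟨by linarith, le_refl _⟩)
        exact intdiff hT heq (Set.Ioo_subset_Icc_self hma) (Set.Ioo_subset_Icc_self hmb)
          (heq hma) (heq hmb)
      rw [setAverage_eq, hiz, smul_zero]
    have hlim : Tendsto (fun j => (⨍ y in Metric.closedBall x (δ j), H y ∂volume)) atTop (nhds (H x)) := haux
    have : H x = 0 := by
      have h0 : Tendsto (fun _ : ℕ => (0 : Em m)) atTop (nhds 0) := tendsto_const_nhds
      refine tendsto_nhds_unique ?_ h0
      exact hlim.congr fun j => (hzero j).symm ▸ rfl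
    have hx0 : H x = h12 x := Set.indicator_of_mem hxm h12
    have := hx0 ▸ this
    exact sub_eq_zero.mp this
  have hgeq : g₁ = g₂ := Lp.ext hg
  subst hgeq
  -- now c₁ = c₂
  have ht0 : (T/2) ∈ Set.Ioo (0:ℝ) T := ⟨by linarith, by linarith⟩
  have hP := heq ht0
  have hP' : c₁ + ∫ s in (0:ℝ)..(T/2), (g₁ : ℝ → Em m) s
      = c₂ + ∫ s in (0:ℝ)..(T/2), (g₁ : ℝ → Em m) s := hP
  have hc : c₁ = c₂ := add_right_cancel hP'
  rw [hc]

end Stmt8Aux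

/-- the Sobolev space `W^{1,2}((0,T),ℝ^m)`, i.e. the set of `f ∈ L²((0,T),ℝ^m)`
admitting a representative `f(t) = c + ∫_0^t g(s) ds` with `c ∈ ℝ^m` and
`g ∈ L²((0,T),ℝ^m)`, is a Borel subset of `L²((0,T),ℝ^m)`. -/
theorem stmt8 (m : ℕ) (hm : 1 ≤ m) (T : ℝ) (hT : 0 < T) :
    MeasurableSet[borel (Lp (Em m) 2 (muT T))]
      {f : Lp (Em m) 2 (muT T) |
        ∃ (c : Em m) (g : Lp (Em m) 2 (muT T)),
          ∀ᵐ t ∂(muT T), f t = c + ∫ s in (0:ℝ)..t, g s} := by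
  letI : MeasurableSpace (Lp (Em m) 2 (muT T)) := borel _
  haveI : BorelSpace (Lp (Em m) 2 (muT T)) := ⟨rfl⟩
  haveI : Fact ((2:ℝ≥0∞) ≠ ∞) := ⟨by norm_num⟩
  haveI hsc : SecondCountableTopology (Lp (Em m) 2 (muT T)) := inferInstance
  haveI hpol : PolishSpace (Lp (Em m) 2 (muT T)) := inferInstance
  have hemb : MeasurableEmbedding (Stmt8Aux.Phi m T hT) :=
    (Stmt8Aux.Phi_cont hT).measurableEmbedding (Stmt8Aux.Phi_inj hT)
  have hset : {f : Lp (Em m) 2 (muT T) |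
        ∃ (c : Em m) (g : Lp (Em m) 2 (muT T)),
          ∀ᵐ t ∂(muT T), f t = c + ∫ s in (0:ℝ)..t, g s}
      = Set.range (Stmt8Aux.Phi m T hT) := by
    ext f
    constructor
    · rintro ⟨c, g, hfg⟩
      refine ⟨(c, g), ?_⟩
      refine Lp.ext ?_
      have hfg' : (f : ℝ → Em m) =ᵐ[muT T] Stmt8Aux.P c g := hfg
      exact (MemLp.coeFn_toLp (Stmt8Aux.memℒp_P hT.le c g)).trans hfg'.symm
    · rintro ⟨⟨c, g⟩, rfl⟩
      exact ⟨c, g, MemLp.coeFn_toLp (Stmt8Aux.memℒp_P hT.le c g)⟩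
  rw [hset]
  exact hemb.measurableSet_range
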